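/- Let R = ℂ[x,y,z,w]/(yz − xw, xz² − y²w). Then the quotient R/(y³ − x²z, z³ − yw²) is isomorphic as a ℂ-algebra to the subring ℂ[s⁴, s³t, st³, t⁴] of ℂ[s,t]. -/

import Mathlib

open MvPolynomial

noncomputable section ComponentIsoAux

abbrev P4' : Type := MvPolynomial (Fin 4) ℂ
abbrev P2' : Type := MvPolynomial (Fin 2) ℂ

def Iid : Ideal P4' :=
  Ideal.span {X 1 * X 2 - X 0 * X 3, X 0 * X 2 ^ 2 - X 1 ^ 2 * X 3,
    X 1 ^ 3 - X 0 ^ 2 * X 2, X 2 ^ 3 - X 1 * X 3 ^ 2}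

def f4 : P4' →ₐ[ℂ] P2' :=
  aeval ![X 0 ^ 4, X 0 ^ 3 * X 1, X 0 * X 1 ^ 3, X 1 ^ 4]

def M (a b c e : ℕ) : P4' := X 0 ^ a * X 1 ^ b * X 2 ^ c * X 3 ^ e

local notation "mkI" => Ideal.Quotient.mk Iid

lemma f4_X0 : f4 (X 0) = X 0 ^ 4 := by simp [f4]
lemma f4_X1 : f4 (X 1) = X 0 ^ 3 * X 1 := by simp [f4]
lemma f4_X2 : f4 (X 2) = X 0 * X 1 ^ 3 := by simp [f4]
lemma f4_X3 : f4 (X 3) = X 1 ^ 4 := by simp [f4]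

lemma f4_M (a b c e : ℕ) :
    f4 (M a b c e) = X 0 ^ (4*a+3*b+c) * X 1 ^ (b+3*c+4*e) := by
  simp only [M, map_mul, map_pow, f4_X0, f4_X1, f4_X2, f4_X3]
  ring

lemma rw1 (a b c e : ℕ) : mkI (M a (b+1) (c+1) e) = mkI (M (a+1) b c (e+1)) := by
  rw [Ideal.Quotient.eq]
  have h : M a (b+1) (c+1) e - M (a+1) b c (e+1)
      = (X 0 ^ a * X 1 ^ b * X 2 ^ c * X 3 ^ e) * (X 1 * X 2 - X 0 * X 3) := by
    simp only [M]; ring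
  rw [h]
  exact Ideal.mul_mem_left _ _ (Ideal.subset_span (by simp))

lemma rw2 (a b c e : ℕ) : mkI (M a (b+3) c e) = mkI (M (a+2) b (c+1) e) := by
  rw [Ideal.Quotient.eq]
  have h : M a (b+3) c e - M (a+2) b (c+1) e
      = (X 0 ^ a * X 1 ^ b * X 2 ^ c * X 3 ^ e) * (X 1 ^ 3 - X 0 ^ 2 * X 2) := by
    simp only [M]; ring
  rw [h]
  exact Ideal.mul_mem_left _ _ (Ideal.subset_span (by simp))

lemma rw3 (a b c e : ℕ) : mkI (M a b (c+3) e) = mkI (M a (b+1) c (e+2)) := by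
  rw [Ideal.Quotient.eq]
  have h : M a b (c+3) e - M a (b+1) c (e+2)
      = (X 0 ^ a * X 1 ^ b * X 2 ^ c * X 3 ^ e) * (X 2 ^ 3 - X 1 * X 3 ^ 2) := by
    simp only [M]; ring
  rw [h]
  exact Ideal.mul_mem_left _ _ (Ideal.subset_span (by simp))

lemma rw4 (a b c e : ℕ) : mkI (M (a+1) b (c+2) e) = mkI (M a (b+2) c (e+1)) := by
  rw [Ideal.Quotient.eq]
  have h : M (a+1) b (c+2) e - M a (b+2) c (e+1)
      = (X 0 ^ a * X 1 ^ b * X 2 ^ c * X 3 ^ e) * (X 0 * X 2 ^ 2 - X 1 ^ 2 * X 3) := by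
    simp only [M]; ring
  rw [h]
  exact Ideal.mul_mem_left _ _ (Ideal.subset_span (by simp))

def Nrm (q : ℕ × ℕ × ℕ × ℕ) : Prop :=
  q.2.1 ≤ 2 ∧ q.2.2.1 ≤ 2 ∧ (1 ≤ q.2.2.1 → q.2.1 = 0) ∧ (q.2.2.1 = 2 → q.1 = 0)

def NormIdx : Type := {q : ℕ × ℕ × ℕ × ℕ // Nrm q}

def v (i : NormIdx) : P4' ⧸ Iid := mkI (M i.1.1 i.1.2.1 i.1.2.2.1 i.1.2.2.2)

lemma span_M (n a b c e : ℕ) (h : b + 2*c ≤ n) :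
    mkI (M a b c e) ∈ Submodule.span ℂ (Set.range v) := by
  induction n generalizing a b c e with
  | zero =>
    have hb : b = 0 := by omega
    have hc : c = 0 := by omega
    subst hb; subst hc
    exact Submodule.subset_span ⟨⟨(a, 0, 0, e), by simp [Nrm]⟩, rfl⟩
  | succ n ih =>
    by_cases hbc : 1 ≤ b ∧ 1 ≤ c
    · obtain ⟨b', rfl⟩ : ∃ b', b = b' + 1 := ⟨b - 1, by omega⟩
      obtain ⟨c', rfl⟩ : ∃ c', c = c' + 1 := ⟨c - 1, by omega⟩
      rw [rw1]
      exact ih _ _ _ _ (by omega)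
    by_cases hb : 3 ≤ b
    · obtain ⟨b', rfl⟩ : ∃ b', b = b' + 3 := ⟨b - 3, by omega⟩
      rw [rw2]
      exact ih _ _ _ _ (by omega)
    by_cases hc : 3 ≤ c
    · obtain ⟨c', rfl⟩ : ∃ c', c = c' + 3 := ⟨c - 3, by omega⟩
      rw [rw3]
      exact ih _ _ _ _ (by omega)
    by_cases hac : 1 ≤ a ∧ 2 ≤ c
    · obtain ⟨a', rfl⟩ : ∃ a', a = a' + 1 := ⟨a - 1, by omega⟩
      obtain ⟨c', rfl⟩ : ∃ c', c = c' + 2 := ⟨c - 2, by omega⟩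
      rw [rw4]
      exact ih _ _ _ _ (by omega)
    · exact Submodule.subset_span ⟨⟨(a, b, c, e), by simp only [Nrm]; omega⟩, rfl⟩

lemma span_all (p : P4') : mkI p ∈ Submodule.span ℂ (Set.range v) := by
  induction p using MvPolynomial.induction_on with
  | C a =>
    have h0 : (M 0 0 0 0 : P4') = 1 := by simp [M]
    have h1 : (C a : P4') = a • (1 : P4') := by
      rw [← Algebra.algebraMap_eq_smul_one]; rfl
    rw [h1, ← Ideal.Quotient.mkₐ_eq_mk ℂ, map_smul, Ideal.Quotient.mkₐ_eq_mk]
    exact Submodule.smul_mem _ _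
      (Submodule.subset_span ⟨⟨(0, 0, 0, 0), by simp [Nrm]⟩, by simp [v, h0]⟩)
  | add p q hp hq =>
    rw [map_add]; exact add_mem hp hq
  | mul_X p i hp =>
    rw [map_mul]
    refine Submodule.span_induction
      (p := fun u _ => u * mkI (X i) ∈ Submodule.span ℂ (Set.range v)) ?_ ?_ ?_ ?_ hp
    · rintro u ⟨⟨⟨a, b, c, e⟩, hn⟩, rfl⟩
      show mkI (M a b c e) * mkI (X i) ∈ _
      rw [← map_mul]
      fin_cases i <;> simp only [Fin.isValue, Fin.zero_eta, Fin.mk_one]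
      · have h : M a b c e * X 0 = M (a+1) b c e := by simp only [M]; ring
        rw [h]; exact span_M (b + 2*c) _ _ _ _ le_rfl
      · have h : M a b c e * X 1 = M a (b+1) c e := by simp only [M]; ring
        rw [h]; exact span_M (b+1 + 2*c) _ _ _ _ le_rfl
      · show mkI (M a b c e * X 2) ∈ _
        have h : M a b c e * X 2 = M a b (c+1) e := by simp only [M]; ring
        rw [h]; exact span_M (b + 2*(c+1)) _ _ _ _ le_rfl
      · show mkI (M a b c e * X 3) ∈ _
        have h : M a b c e * X 3 = M a b c (e+1) := by simp only [M]; ring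
        rw [h]; exact span_M (b + 2*c) _ _ _ _ le_rfl
    · simp
    · intro x y _ _ hx hy
      rw [add_mul]; exact add_mem hx hy
    · intro r x _ hx
      rw [smul_mul_assoc]; exact Submodule.smul_mem _ _ hx

def ε (i : NormIdx) : Fin 2 →₀ ℕ :=
  Finsupp.single 0 (4*i.1.1 + 3*i.1.2.1 + i.1.2.2.1) +
  Finsupp.single 1 (i.1.2.1 + 3*i.1.2.2.1 + 4*i.1.2.2.2)

lemma f4_v (i : NormIdx) :
    f4 (M i.1.1 i.1.2.1 i.1.2.2.1 i.1.2.2.2) = monomial (ε i) 1 := by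
  rw [f4_M, X_pow_eq_monomial, X_pow_eq_monomial, monomial_mul, one_mul, ε]

lemma ε_inj : Function.Injective ε := by
  rintro ⟨⟨a, b, c, e⟩, hn⟩ ⟨⟨a', b', c', e'⟩, hn'⟩ h
  have h0 : 4*a + 3*b + c = 4*a' + 3*b' + c' := by
    have := DFunLike.congr_fun h 0
    simpa [ε, Finsupp.single_apply] using this
  have h1 : b + 3*c + 4*e = b' + 3*c' + 4*e' := by
    have := DFunLike.congr_fun h 1
    simpa [ε, Finsupp.single_apply] using this
  simp only [Nrm] at hn hn'
  obtain ⟨hb2, hc2, hcb, hca⟩ := hn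
  obtain ⟨hb2', hc2', hcb', hca'⟩ := hn'
  have : a = a' ∧ b = b' ∧ c = c' ∧ e = e' := by
    interval_cases c <;> interval_cases c' <;> interval_cases b <;>
      interval_cases b' <;> omega
  obtain ⟨rfl, rfl, rfl, rfl⟩ := this
  rfl

lemma g_li : LinearIndependent ℂ (fun i : NormIdx => (monomial (ε i) 1 : P2')) := by
  have hb := (basisMonomials (Fin 2) ℂ).linearIndependent
  have h2 := hb.comp ε ε_inj
  exact h2

end ComponentIsoAux

theorem component_aux :
    ∃ φ : (P4' ⧸ Iid) →ₐ[ℂ] P2',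
      Function.Injective φ ∧
      φ.range = Algebra.adjoin ℂ
        {(X 0 : P2') ^ 4, X 0 ^ 3 * X 1, X 0 * X 1 ^ 3, X 1 ^ 4} ∧
      φ (Ideal.Quotient.mk Iid (X 0)) = X 0 ^ 4 ∧
      φ (Ideal.Quotient.mk Iid (X 1)) = X 0 ^ 3 * X 1 ∧
      φ (Ideal.Quotient.mk Iid (X 2)) = X 0 * X 1 ^ 3 ∧
      φ (Ideal.Quotient.mk Iid (X 3)) = X 1 ^ 4 := by
  have hI0 : ∀ p ∈ Iid, f4 p = 0 := by
    intro p hp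
    refine Submodule.span_induction (p := fun q _ => f4 q = 0) ?_ ?_ ?_ ?_ hp
    · intro g hg
      simp only [Set.mem_insert_iff, Set.mem_singleton_iff] at hg
      rcases hg with rfl | rfl | rfl | rfl <;>
        · simp only [map_sub, map_mul, map_pow, f4_X0, f4_X1, f4_X2, f4_X3]; ring
    · exact map_zero f4
    · intro x y _ _ hx hy; rw [map_add, hx, hy, add_zero]
    · intro r x _ hx; rw [smul_eq_mul, map_mul, hx, mul_zero]
  set φ := Ideal.Quotient.liftₐ Iid f4 hI0 with hφ
  have hφmk : ∀ p : P4', φ (Ideal.Quotient.mk Iid p) = f4 p := fun p =>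
    (Ideal.Quotient.liftₐ_apply _ _ _ _).trans (Ideal.Quotient.lift_mk _ _ _)
  refine ⟨φ, ?_, ?_, (hφmk _).trans f4_X0, (hφmk _).trans f4_X1,
    (hφmk _).trans f4_X2, (hφmk _).trans f4_X3⟩
  · rw [injective_iff_map_eq_zero]
    intro u hu
    obtain ⟨p, rfl⟩ := Ideal.Quotient.mk_surjective u
    obtain ⟨cf, hcf⟩ := Finsupp.mem_span_range_iff_exists_finsupp.mp (span_all p)
    have himg : (cf.sum fun i a => a • (monomial (ε i) 1 : P2')) = 0 := by
      rw [← hu, ← hcf, Finsupp.sum, Finsupp.sum, map_sum]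
      refine Finset.sum_congr rfl fun i _ => ?_
      rw [map_smul, v, hφmk, f4_v]
    have hc0 : cf = 0 := by
      refine linearIndependent_iff.mp g_li cf ?_
      rw [Finsupp.linearCombination_apply]
      exact himg
    rw [← hcf, hc0, Finsupp.sum_zero_index]
  · have h1 : φ.range = f4.range := by
      ext u
      simp only [AlgHom.mem_range]
      constructor
      · rintro ⟨q, rfl⟩
        obtain ⟨p, rfl⟩ := Ideal.Quotient.mk_surjective q
        exact ⟨p, (hφmk p).symm⟩
      · rintro ⟨p, rfl⟩
        exact ⟨Ideal.Quotient.mk Iid p, hφmk p⟩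
    have hset : Set.range ![(X 0 : P2') ^ 4, X 0 ^ 3 * X 1, X 0 * X 1 ^ 3, X 1 ^ 4]
        = {(X 0 : P2') ^ 4, X 0 ^ 3 * X 1, X 0 * X 1 ^ 3, X 1 ^ 4} := by
      ext u
      simp [Matrix.range_cons, Matrix.range_empty]
      constructor <;> rintro (h|h|h|h) <;> simp only [h, true_or, or_true]
    rw [h1, f4, ← Algebra.adjoin_range_eq_range_aeval, hset]

/-- The quotient `ℂ[x,y,z,w]/(yz - xw, xz² - y²w, y³ - x²z, z³ - yw²)` is
isomorphic, as a `ℂ`-algebra, to the subring `ℂ[s⁴, s³t, st³, t⁴]` of `ℂ[s,t]`,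
via `x ↦ s⁴`, `y ↦ s³t`, `z ↦ st³`, `w ↦ t⁴`. -/
theorem component_iso_semigroup_ring :
    letI x : MvPolynomial (Fin 4) ℂ := X 0
    letI y : MvPolynomial (Fin 4) ℂ := X 1
    letI z : MvPolynomial (Fin 4) ℂ := X 2
    letI w : MvPolynomial (Fin 4) ℂ := X 3
    letI I : Ideal (MvPolynomial (Fin 4) ℂ) :=
      Ideal.span {y * z - x * w, x * z ^ 2 - y ^ 2 * w,
        y ^ 3 - x ^ 2 * z, z ^ 3 - y * w ^ 2}
    letI s : MvPolynomial (Fin 2) ℂ := X 0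
    letI t : MvPolynomial (Fin 2) ℂ := X 1
    ∃ φ : (MvPolynomial (Fin 4) ℂ ⧸ I) →ₐ[ℂ] MvPolynomial (Fin 2) ℂ,
      Function.Injective φ ∧
      φ.range = Algebra.adjoin ℂ {s ^ 4, s ^ 3 * t, s * t ^ 3, t ^ 4} ∧
      φ (Ideal.Quotient.mk I x) = s ^ 4 ∧
      φ (Ideal.Quotient.mk I y) = s ^ 3 * t ∧
      φ (Ideal.Quotient.mk I z) = s * t ^ 3 ∧
      φ (Ideal.Quotient.mk I w) = t ^ 4 :=
  component_aux
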